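/- arXiv:1604.04436 — 3 statements merged into one kernel-verified Lean document; each statement's English description precedes it below -/
import Mathlib

section
/- With S_n defined as in the recursive comb construction (S_0 the ray, S_{n+1} a spine with copies of S_n attached to each spine vertex), S_{n+1} does not embed into S_n for any n; in particular the trees S_n, n ∈ ℕ, are pairwise topologically inequivalent and form a strictly increasing ω-chain under the topological minor quasi-order. -/
/-- Vertex set of the recursive comb `S n`: `S 0` is the ray on ℕ;
`S (n+1)` has spine vertices `(i, none)` and branch vertices `(i, some x)`
for `x` a vertex of `S n` (the copy of `S n` attached above spine vertex `i`). -/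
def Vtx : ℕ → Type
  | 0 => ℕ
  | n + 1 => ℕ × Option (Vtx n)

/-- The tree order on `S n`. -/
def Sle : (n : ℕ) → Vtx n → Vtx n → Prop
  | 0 => fun a b => Nat.le a b
  | n + 1 => fun a b =>
    match a, b with
    | (i, none), (j, none) => i ≤ j
    | (i, none), (j, some _) => i ≤ j
    | (_, some _), (_, none) => False
    | (i, some x), (j, some y) => i = j ∧ Sle n x y

/-- `S m` embeds into `S n` as a topological minor. -/
def SEmbeds (m n : ℕ) : Prop :=
  ∃ f : Vtx m → Vtx n, Function.Injective f ∧ ∀ a b, Sle m a b ↔ Sle n (f a) (f b)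

/-- Constructor for vertices of `S (n+1)`. -/
def mkV (n : ℕ) (i : ℕ) (o : Option (Vtx n)) : Vtx (n + 1) := (i, o)

/-! ### Auxiliary machinery -/

/-- Destructor for vertices of `S (n+1)`. -/
def unV (n : ℕ) (v : Vtx (n + 1)) : ℕ × Option (Vtx n) := v

lemma mkV_unV (n : ℕ) (v : Vtx (n+1)) : mkV n (unV n v).1 (unV n v).2 = v := rfl

lemma unV_mkV (n : ℕ) (i : ℕ) (o : Option (Vtx n)) : unV n (mkV n i o) = (i, o) := rfl

lemma mkV_inj {n i j : ℕ} {o o' : Option (Vtx n)} (h : mkV n i o = mkV n j o') :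
    i = j ∧ o = o' :=
  ⟨congrArg (fun v => (unV n v).1) h, congrArg (fun v => (unV n v).2) h⟩

lemma Sle_nn (n i j) : Sle (n+1) (mkV n i none) (mkV n j none) ↔ i ≤ j := Iff.rfl
lemma Sle_ns (n i j y) : Sle (n+1) (mkV n i none) (mkV n j (some y)) ↔ i ≤ j := Iff.rfl
lemma Sle_sn (n i j x) : Sle (n+1) (mkV n i (some x)) (mkV n j none) ↔ False := Iff.rfl
lemma Sle_ss (n i j x y) :
    Sle (n+1) (mkV n i (some x)) (mkV n j (some y)) ↔ (i = j ∧ Sle n x y) := Iff.rfl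
lemma Sle_zero (a b : Vtx 0) : Sle 0 a b ↔ Nat.le a b := Iff.rfl

/-- `S n` embeds into `S (n+1)` (into the branch above spine vertex 0). -/
lemma sembeds_succ (n : ℕ) : SEmbeds n (n + 1) := by
  refine ⟨fun v => mkV n 0 (some v), ?_, ?_⟩
  · intro a b h
    exact Option.some_injective _ (mkV_inj h).2
  · intro a b
    rw [Sle_ss]
    simp

lemma sembeds_refl (n : ℕ) : SEmbeds n n := ⟨id, fun _ _ h => h, fun _ _ => Iff.rfl⟩

lemma sembeds_trans {m n p : ℕ} (h1 : SEmbeds m n) (h2 : SEmbeds n p) : SEmbeds m p := by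
  obtain ⟨f, hf, hof⟩ := h1
  obtain ⟨g, hg, hog⟩ := h2
  exact ⟨g ∘ f, hg.comp hf, fun a b => (hof a b).trans (hog (f a) (f b))⟩

lemma sembeds_of_le {m n : ℕ} (h : m ≤ n) : SEmbeds m n := by
  induction h with
  | refl => exact sembeds_refl m
  | step h ih => exact sembeds_trans ih (sembeds_succ _)

/-- If an embedding into `S (n+1)` has all its values above a branch vertex
`(k, some y)`, then it yields an embedding into `S n`. -/
lemma extract {m n : ℕ} (f : Vtx m → Vtx (n+1)) (hinj : Function.Injective f)
    (hord : ∀ a b, Sle m a b ↔ Sle (n+1) (f a) (f b))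
    (k : ℕ) (y : Vtx n) (hb : ∀ v, Sle (n+1) (mkV n k (some y)) (f v)) :
    SEmbeds m n := by
  have h : ∀ v, ∃ z, f v = mkV n k (some z) := by
    intro v
    have hv := hb v
    rcases ho : (unV n (f v)).2 with _ | z
    · exfalso
      have h1 : f v = mkV n (unV n (f v)).1 none := by
        conv_lhs => rw [← mkV_unV n (f v)]
        rw [ho]
      rw [h1] at hv
      exact (Sle_sn n k _ y).mp hv
    · have h1 : f v = mkV n (unV n (f v)).1 (some z) := by
        conv_lhs => rw [← mkV_unV n (f v)]
        rw [ho]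
      rw [h1] at hv
      obtain ⟨hk, -⟩ := (Sle_ss n k _ y z).mp hv
      exact ⟨z, by rw [h1, ← hk]⟩
  choose g hg using h
  refine ⟨g, ?_, ?_⟩
  · intro a b hab
    apply hinj
    rw [hg a, hg b, hab]
  · intro a b
    rw [hord a b, hg a, hg b, Sle_ss]
    simp

/-- The key step: `S (n+1)` does not embed into `S n`. -/
lemma not_sembeds_succ : ∀ n : ℕ, ¬ SEmbeds (n + 1) n := by
  intro n
  induction n with
  | zero =>
    rintro ⟨f, hinj, hord⟩
    have z0 : Vtx 0 := (0 : ℕ)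
    have h1 : ¬ Sle 1 (mkV 0 0 (some z0)) (mkV 0 1 (some z0)) := by
      rw [Sle_ss]; simp
    have h2 : ¬ Sle 1 (mkV 0 1 (some z0)) (mkV 0 0 (some z0)) := by
      rw [Sle_ss]; simp
    rw [hord] at h1 h2
    rcases Nat.le_total (f (mkV 0 0 (some z0)) : ℕ) (f (mkV 0 1 (some z0)) : ℕ) with h | h
    · exact h1 h
    · exact h2 h
  | succ n IH =>
    rintro ⟨f, hinj, hord⟩
    apply IH
    -- spine vertex 1 of S (n+2)
    set s1 : Vtx (n+2) := mkV (n+1) 1 none with hs1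
    rcases ho : (unV n (f s1)).2 with _ | x
    · -- f s1 is a spine vertex (σ1, none)
      set σ1 : ℕ := (unV n (f s1)).1 with hσ1
      have hfs1 : f s1 = mkV n σ1 none := by
        conv_lhs => rw [← mkV_unV n (f s1)]
        rw [ho]
      -- the chain c a = (0, some (a, none))
      set c : ℕ → Vtx (n+2) := fun a => mkV (n+1) 0 (some (mkV n a none)) with hc
      have hcinj : Function.Injective c := by
        intro a b h
        have h2 := Option.some_injective _ (mkV_inj h).2
        exact (mkV_inj h2).1
      have hnotle : ∀ a, ¬ Sle (n+2) s1 (c a) := by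
        intro a h
        have := (Sle_ns (n+1) 1 0 (mkV n a none)).mp h
        omega
      by_cases hex : ∃ a z, (unV n (f (c a))).2 = some z
      · -- some element of the chain maps to a branch vertex
        obtain ⟨a, z, hz⟩ := hex
        set k : ℕ := (unV n (f (c a))).1 with hk
        have hfca : f (c a) = mkV n k (some z) := by
          conv_lhs => rw [← mkV_unV n (f (c a))]
          rw [hz]
        -- embed S (n+1) above c a via shifting
        set e : Vtx (n+1) → Vtx (n+2) :=
          fun v => mkV (n+1) 0 (some (mkV n ((unV n v).1 + a) (unV n v).2)) with he
        have he_shift : ∀ u v : Vtx (n+1),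
            Sle (n+1) (mkV n ((unV n u).1 + a) (unV n u).2)
              (mkV n ((unV n v).1 + a) (unV n v).2) ↔ Sle (n+1) u v := by
          intro u v
          conv_rhs => rw [← mkV_unV n u, ← mkV_unV n v]
          rcases (unV n u).2 with _ | xu <;> rcases (unV n v).2 with _ | xv
          · rw [Sle_nn, Sle_nn]; omega
          · rw [Sle_ns, Sle_ns]; omega
          · rw [Sle_sn, Sle_sn]
          · rw [Sle_ss, Sle_ss]
            constructor
            · rintro ⟨h1, h2⟩; exact ⟨by omega, h2⟩
            · rintro ⟨h1, h2⟩; exact ⟨by omega, h2⟩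
        have he_inj : Function.Injective e := by
          intro u v h
          have h2 := Option.some_injective _ (mkV_inj h).2
          obtain ⟨h3, h4⟩ := mkV_inj h2
          have h5 : (unV n u).1 = (unV n v).1 := by omega
          rw [← mkV_unV n u, ← mkV_unV n v, h5, h4]
        have he_ord : ∀ u v, Sle (n+1) u v ↔ Sle (n+2) (e u) (e v) := by
          intro u v
          rw [he]
          rw [Sle_ss]
          rw [he_shift]
          simp
        have hca_le : ∀ v, Sle (n+2) (c a) (e v) := by
          intro v
          rw [hc, he, Sle_ss]
          refine ⟨rfl, ?_⟩
          rcases (unV n v).2 with _ | xv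
          · rw [Sle_nn]; omega
          · rw [Sle_ns]; omega
        refine extract (f ∘ e) (hinj.comp he_inj)
          (fun u v => (he_ord u v).trans (hord (e u) (e v))) k z ?_
        intro v
        have h6 : Sle (n+1) (f (c a)) (f (e v)) := (hord _ _).mp (hca_le v)
        rwa [hfca] at h6
      · -- all chain elements map to spine vertices: pigeonhole contradiction
        exfalso
        push_neg at hex
        have hall : ∀ a, f (c a) = mkV n (unV n (f (c a))).1 none := by
          intro a
          conv_lhs => rw [← mkV_unV n (f (c a))]
          rcases h : (unV n (f (c a))).2 with _ | z
          · rfl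
          · exact absurd h (hex a z)
        set K : ℕ → ℕ := fun a => (unV n (f (c a))).1 with hK
        have hKlt : ∀ a, K a < σ1 := by
          intro a
          have h1 : ¬ Sle (n+1) (f s1) (f (c a)) := fun h => hnotle a ((hord _ _).mpr h)
          rw [hfs1, hall a] at h1
          rw [Sle_nn] at h1
          simp only [hK, hσ1]
          omega
        have hKinj : Function.Injective K := by
          intro a b h
          simp only [hK] at h
          apply hcinj
          apply hinj
          rw [hall a, hall b, h]
        have hcard := Finset.card_le_card_of_injOn K
          (fun a _ => Finset.mem_range.mpr (hKlt a)) (hKinj.injOn)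
          (s := Finset.range (σ1 + 1)) (t := Finset.range σ1)
        simp only [Finset.card_range] at hcard
        omega
    · -- f s1 is a branch vertex (k, some x)
      set k : ℕ := (unV n (f s1)).1 with hk
      have hfs1 : f s1 = mkV n k (some x) := by
        conv_lhs => rw [← mkV_unV n (f s1)]
        rw [ho]
      set e : Vtx (n+1) → Vtx (n+2) := fun v => mkV (n+1) 1 (some v) with he
      have he_inj : Function.Injective e := by
        intro u v h
        exact Option.some_injective _ (mkV_inj h).2
      have he_ord : ∀ u v, Sle (n+1) u v ↔ Sle (n+2) (e u) (e v) := by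
        intro u v
        rw [he, Sle_ss]
        simp
      have hs1_le : ∀ v, Sle (n+2) s1 (e v) := by
        intro v
        rw [hs1, he, Sle_ns]
      refine extract (f ∘ e) (hinj.comp he_inj)
        (fun u v => (he_ord u v).trans (hord (e u) (e v))) k x ?_
      intro v
      have h6 : Sle (n+1) (f s1) (f (e v)) := (hord _ _).mp (hs1_le v)
      rwa [hfs1] at h6

/-- S_(n+1) never embeds into S_n; the trees S_n are pairwise topologically
inequivalent and form a strictly increasing ω-chain under the topological
minor quasi-order. -/
theorem S_chain_strict :
    (∀ n : ℕ, ¬ SEmbeds (n + 1) n) ∧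
    (∀ m n : ℕ, m ≠ n → ¬ (SEmbeds m n ∧ SEmbeds n m)) ∧
    (∀ n : ℕ, SEmbeds n (n + 1)) := by
  refine ⟨not_sembeds_succ, ?_, sembeds_succ⟩
  intro m n hmn ⟨h1, h2⟩
  rcases Nat.lt_or_ge m n with h | h
  · exact not_sembeds_succ m (sembeds_trans (sembeds_of_le h) h2)
  · have h' : n < m := by omega
    exact not_sembeds_succ n (sembeds_trans (sembeds_of_le h') h1)
end

section
/- Suppose T is the tree S_{n+1} (a spine with a copy of S_n at each spine vertex) and φ : S_{n+1} → S_{n+1} is an embedding. If a vertex of the i-th branch copy of S_n is mapped by φ to a spine vertex p, then every branch of S_{n+1} attached at a spine vertex j > i must be mapped into the (finitely many) branches attached at spine vertices strictly below p together with p's predecessors; in particular only finitely many spine positions are available above the images of later branches. -/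
/-- If an embedding of S_(n+1) into itself maps a vertex of the i-th branch copy
of S_n to a spine vertex p, then every vertex of any branch attached at a spine
vertex j > i is mapped strictly below level p: to a spine vertex q < p (a
predecessor of p) or into a branch attached at a spine vertex q < p. -/
theorem branch_to_spine_blocks_later_branches
    (n : ℕ) (f : Vtx (n + 1) → Vtx (n + 1))
    (hinj : Function.Injective f)
    (hemb : ∀ a b : Vtx (n + 1), Sle (n + 1) a b ↔ Sle (n + 1) (f a) (f b))
    (i p : ℕ) (x : Vtx n)
    (hfx : f (mkV n i (some x)) = mkV n p none) :
    ∀ j : ℕ, i < j → ∀ y : Vtx n, ∃ q : ℕ, q < p ∧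
      (f (mkV n j (some y)) = mkV n q none ∨
        ∃ z : Vtx n, f (mkV n j (some y)) = mkV n q (some z)) := by
  intro j hij y
  have hne : i ≠ j := Nat.ne_of_lt hij
  have h1 : ¬ Sle (n + 1) (mkV n i (some x)) (mkV n j (some y)) :=
    fun h => hne h.1
  have h2 : ¬ Sle (n + 1) (mkV n j (some y)) (mkV n i (some x)) :=
    fun h => hne h.1.symm
  have h1' : ¬ Sle (n + 1) (f (mkV n i (some x))) (f (mkV n j (some y))) :=
    fun h => h1 ((hemb _ _).mpr h)
  have h2' : ¬ Sle (n + 1) (f (mkV n j (some y))) (f (mkV n i (some x))) :=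
    fun h => h2 ((hemb _ _).mpr h)
  rw [hfx] at h1' h2'
  rcases hfq : f (mkV n j (some y)) with ⟨q, o⟩
  rw [hfq] at h1' h2'
  cases o with
  | none =>
    exact absurd (by exact Nat.le_of_not_lt fun h => h2' (Nat.le_of_lt h)) h1'
  | some z =>
    refine ⟨q, Nat.lt_of_not_le fun h => h1' h, Or.inr ⟨z, rfl⟩⟩
end

section
/- There exist uncountably many (at least ℵ₁) pairwise non-equivalent countable rooted trees under the topological minor relation; concretely, there is a family (T_α)_{α < ω₁} of rooted locally finite trees such that for all α < β < ω₁, T_α ⪯ T_β and T_β ⪯̸ T_α. -/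
/-- A rooted tree: a partial order with a least element (the root)
where every vertex has a finite chain of predecessors. -/
structure RTree where
  V : Type
  le : V → V → Prop
  le_refl : ∀ a, le a a
  le_antisymm : ∀ a b, le a b → le b a → a = b
  le_trans : ∀ a b c, le a b → le b c → le a c
  root : V
  root_le : ∀ v, le root v
  pred_fin : ∀ v, {w | le w v}.Finite
  pred_chain : ∀ v a b, le a v → le b v → le a b ∨ le b a

/-- `w` is an immediate successor of `v`. -/
def RTree.ImmSucc (T : RTree) (v w : T.V) : Prop :=
  T.le v w ∧ v ≠ w ∧ ∀ u, T.le v u → T.le u w → u = v ∨ u = w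

/-- Locally finite: every vertex has finitely many immediate successors. -/
def RTree.LocFin (T : RTree) : Prop := ∀ v, {w | T.ImmSucc v w}.Finite

/-- Topological-minor embedding: an injective order-embedding. -/
def RTree.Embeds (T U : RTree) : Prop :=
  ∃ f : T.V → U.V, Function.Injective f ∧ ∀ a b, T.le a b ↔ U.le (f a) (f b)

/-! ### Auxiliary: the order on vertices, coded as nonempty lists of naturals -/

def lle : List ℕ → List ℕ → Prop
  | [], _ => False
  | [_], [] => False
  | [m], n :: _ => m ≤ n
  | _ :: _ :: _, [] => False
  | a :: b :: l, c :: r => a = c ∧ lle (b :: l) r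

@[simp] lemma lle_nil_left (y : List ℕ) : ¬ lle [] y := by simp [lle]

@[simp] lemma lle_nil_right (x : List ℕ) : ¬ lle x [] := by
  match x with
  | [] => simp [lle]
  | [m] => simp [lle]
  | a :: b :: l => simp [lle]

@[simp] lemma lle_single (m n : ℕ) (r : List ℕ) : lle [m] (n :: r) ↔ m ≤ n := Iff.rfl

lemma lle_cons_cons (a c : ℕ) (l r : List ℕ) (hl : l ≠ []) :
    lle (a :: l) (c :: r) ↔ a = c ∧ lle l r := by
  match l with
  | [] => exact absurd rfl hl
  | b :: l' => exact Iff.rfl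

lemma lle_ne_nil_left {x y : List ℕ} (h : lle x y) : x ≠ [] := by
  rintro rfl; exact lle_nil_left y h

lemma lle_ne_nil_right {x y : List ℕ} (h : lle x y) : y ≠ [] := by
  rintro rfl; exact lle_nil_right x h

lemma lle_refl {l : List ℕ} (h : l ≠ []) : lle l l := by
  induction l with
  | nil => exact absurd rfl h
  | cons a l ih =>
    match l with
    | [] => simp [lle]
    | b :: l' => exact ⟨rfl, ih (by simp)⟩

lemma lle_cons_inv {x : List ℕ} {n : ℕ} {r : List ℕ} (h : lle x (n :: r)) :
    (∃ m, x = [m] ∧ m ≤ n) ∨ (∃ l, x = n :: l ∧ l ≠ [] ∧ lle l r) := by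
  match x with
  | [] => exact absurd h (lle_nil_left _)
  | [m] => exact Or.inl ⟨m, rfl, h⟩
  | a :: b :: l =>
    obtain ⟨rfl, h2⟩ := h
    exact Or.inr ⟨b :: l, rfl, by simp, h2⟩

lemma lle_trans {x y z : List ℕ} (h1 : lle x y) (h2 : lle y z) : lle x z := by
  induction y generalizing x z with
  | nil => exact absurd h1 (lle_nil_right _)
  | cons n r ih =>
    match z with
    | [] => exact absurd h2 (lle_nil_right _)
    | c :: s =>
      rcases lle_cons_inv h1 with ⟨m, rfl, hm⟩ | ⟨l, rfl, hl, hlr⟩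
      · cases r with
        | nil => exact le_trans hm h2
        | cons b r' => obtain ⟨rfl, -⟩ := h2; exact hm
      · rw [lle_cons_cons _ _ _ _ (lle_ne_nil_right hlr)] at h2
        obtain ⟨rfl, hrs⟩ := h2
        rw [lle_cons_cons _ _ _ _ hl]
        exact ⟨rfl, ih hlr hrs⟩

lemma lle_antisymm {x y : List ℕ} (h1 : lle x y) (h2 : lle y x) : x = y := by
  induction y generalizing x with
  | nil => exact absurd h1 (lle_nil_right _)
  | cons n r ih =>
    rcases lle_cons_inv h1 with ⟨m, rfl, hm⟩ | ⟨l, rfl, hl, hlr⟩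
    · cases r with
      | nil => simp [Nat.le_antisymm hm h2]
      | cons b r' => exact absurd h2.2 (lle_nil_right _)
    · rw [lle_cons_cons _ _ _ _ (lle_ne_nil_right hlr)] at h2
      rw [ih hlr h2.2]

lemma lle_chain {v a b : List ℕ} (ha : lle a v) (hb : lle b v) : lle a b ∨ lle b a := by
  induction v generalizing a b with
  | nil => exact absurd ha (lle_nil_right _)
  | cons n r ih =>
    rcases lle_cons_inv ha with ⟨m, rfl, hm⟩ | ⟨l, rfl, hl, hlr⟩ <;>
      rcases lle_cons_inv hb with ⟨m', rfl, hm'⟩ | ⟨l', rfl, hl', hl'r⟩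
    · rcases le_total m m' with h | h
      · exact Or.inl h
      · exact Or.inr h
    · exact Or.inl hm
    · exact Or.inr hm'
    · rcases ih hlr hl'r with h | h
      · exact Or.inl ((lle_cons_cons _ _ _ _ hl).2 ⟨rfl, h⟩)
      · exact Or.inr ((lle_cons_cons _ _ _ _ hl').2 ⟨rfl, h⟩)

lemma lle_intro (a : List ℕ) {m n : ℕ} (r : List ℕ) (h : m ≤ n) :
    lle (a ++ [m]) (a ++ n :: r) := by
  induction a with
  | nil => exact h
  | cons c a ih =>
    rw [List.cons_append, List.cons_append, lle_cons_cons _ _ _ _ (by simp)]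
    exact ⟨rfl, ih⟩

lemma lle_dest {x y : List ℕ} (h : lle x y) :
    ∃ a m n r, x = a ++ [m] ∧ y = a ++ n :: r ∧ m ≤ n := by
  induction x generalizing y with
  | nil => exact absurd h (lle_nil_left _)
  | cons c l ih =>
    match y with
    | [] => exact absurd h (lle_nil_right _)
    | d :: s =>
      cases l with
      | nil => exact ⟨[], c, d, s, rfl, rfl, h⟩
      | cons b l' =>
        obtain ⟨rfl, h2⟩ := h
        obtain ⟨a, m, n, r, h3, h4, h5⟩ := ih h2
        exact ⟨c :: a, m, n, r, by simp [h3], by simp [h4], h5⟩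

lemma lle_append_left (c : List ℕ) {x y : List ℕ} (hx : x ≠ []) :
    lle (c ++ x) (c ++ y) ↔ lle x y := by
  induction c with
  | nil => exact Iff.rfl
  | cons e c ih =>
    rw [List.cons_append, List.cons_append,
      lle_cons_cons _ _ _ _ (by simp [hx]), ih]
    simp

lemma lle_zero {l : List ℕ} (h : l ≠ []) : lle [0] l := by
  match l with
  | [] => exact absurd rfl h
  | n :: r => exact Nat.zero_le n

lemma le_foldr_max {x : ℕ} : ∀ {l : List ℕ}, x ∈ l → x ≤ l.foldr max 0 := by
  intro l
  induction l with
  | nil => simp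
  | cons a l ih =>
    intro h
    rcases List.mem_cons.mp h with rfl | h
    · simp
    · exact le_trans (ih h) (le_max_right _ _)

lemma preds_finite (v : List ℕ) : {l : List ℕ | lle l v}.Finite := by
  apply Set.Finite.subset
    (((Set.finite_Iio v.length).prod (Set.finite_Iic (v.foldr max 0))).image
      (fun p : ℕ × ℕ => v.take p.1 ++ [p.2]))
  rintro l hl
  obtain ⟨a, m, n, r, rfl, hv, hmn⟩ := lle_dest hl
  refine ⟨(a.length, m), ⟨?_, ?_⟩, ?_⟩
  · show a.length < v.length
    rw [hv]; simp
  · show m ≤ v.foldr max 0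
    exact le_trans hmn (le_foldr_max (by rw [hv]; exact List.mem_append_right _ List.mem_cons_self))
  · show v.take a.length ++ [m] = a ++ [m]
    rw [hv, List.take_left]

/-! ### A sequence of subtrees below each ordinal -/

lemma exists_seq (α : Ordinal) (h0 : 0 < α) (h1 : α < (Cardinal.aleph 1).ord) :
    ∃ g : ℕ → Ordinal, (∀ n, g n < α) ∧ ∀ γ < α, ∃ n, g n = γ := by
  have hcard : α.card ≤ Cardinal.aleph0 := by
    have := Cardinal.lt_ord.mp h1
    rwa [← Cardinal.succ_aleph0, Order.lt_succ_iff] at this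
  have hc : (Set.Iio α).Countable := by
    rw [← Set.countable_coe_iff]
    apply Cardinal.mk_le_aleph0_iff.mp
    rw [Ordinal.mk_Iio_ordinal]
    exact le_of_le_of_eq (Cardinal.lift_le.mpr hcard) Cardinal.lift_aleph0
  obtain ⟨g0, hg0⟩ := hc.exists_eq_range ⟨0, h0⟩
  refine ⟨g0, fun n => ?_, fun γ hγ => ?_⟩
  · have : g0 n ∈ Set.Iio α := by rw [hg0]; exact ⟨n, rfl⟩
    exact this
  · have : γ ∈ Set.range g0 := by rw [← hg0]; exact hγ
    exact this

open scoped Classical in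
noncomputable def dfun (α : Ordinal) : ℕ → Ordinal :=
  if h : ∃ δ, α = δ + 1 then fun _ => h.choose
  else if h2 : 0 < α ∧ α < (Cardinal.aleph 1).ord then
    (exists_seq α h2.1 h2.2).choose
  else fun _ => 0

lemma dfun_succ (δ : Ordinal) (n : ℕ) : dfun (δ + 1) n = δ := by
  have h : ∃ δ', δ + 1 = δ' + 1 := ⟨δ, rfl⟩
  rw [dfun, dif_pos h]
  have h2 := h.choose_spec
  have h3 : Order.succ δ = Order.succ h.choose := by
    rw [← Ordinal.add_one_eq_succ, ← Ordinal.add_one_eq_succ]; exact h2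
  exact (Order.succ_eq_succ_iff.mp h3).symm

lemma dfun_lt {α : Ordinal} (h0 : 0 < α) (h1 : α < (Cardinal.aleph 1).ord) (n : ℕ) :
    dfun α n < α := by
  rw [dfun]
  split_ifs with h h2
  · conv_rhs => rw [h.choose_spec]
    rw [Ordinal.add_one_eq_succ]
    exact Order.lt_succ _
  · exact (exists_seq α h2.1 h2.2).choose_spec.1 n
  · exact absurd ⟨h0, h1⟩ h2

lemma dfun_surj {α γ : Ordinal} (hγ : γ < α) (h1 : α < (Cardinal.aleph 1).ord)
    (hns : ¬ ∃ δ, α = δ + 1) : ∃ n, dfun α n = γ := by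
  have h0 : 0 < α := (pos_iff_ne_zero.mpr (by rintro rfl; exact not_lt.mpr zero_le hγ))
  rw [dfun, dif_neg hns, dif_pos ⟨h0, h1⟩]
  exact (exists_seq α h0 h1).choose_spec.2 γ hγ

/-! ### Valid vertex codes -/

def Valid : List ℕ → Ordinal → Prop
  | [], _ => False
  | [_], _ => True
  | n :: b :: l, α => dfun α n < α ∧ Valid (b :: l) (dfun α n)

@[simp] lemma valid_nil (α : Ordinal) : ¬ Valid [] α := by simp [Valid]

@[simp] lemma valid_single (n : ℕ) (α : Ordinal) : Valid [n] α := by simp [Valid]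

lemma valid_cons {l : List ℕ} (hl : l ≠ []) (n : ℕ) (α : Ordinal) :
    Valid (n :: l) α ↔ dfun α n < α ∧ Valid l (dfun α n) := by
  match l with
  | [] => exact absurd rfl hl
  | b :: l2 => rw [Valid]

lemma valid_ne_nil {l : List ℕ} {α : Ordinal} (h : Valid l α) : l ≠ [] := by
  rintro rfl; exact valid_nil α h

lemma valid_snoc {a : List ℕ} {m : ℕ} {α : Ordinal} (h : Valid (a ++ [m]) α) (k : ℕ) :
    Valid (a ++ [k]) α := by
  induction a generalizing α with
  | nil => simp
  | cons c a ih =>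
    rw [List.cons_append] at h ⊢
    rw [valid_cons (by simp) c α] at h ⊢
    exact ⟨h.1, ih h.2⟩

lemma valid_concat_of_cons {a : List ℕ} {n : ℕ} {r : List ℕ} {α : Ordinal}
    (h : Valid (a ++ n :: r) α) : Valid (a ++ [n]) α := by
  induction a generalizing α with
  | nil => simp
  | cons c a ih =>
    rw [List.cons_append] at h ⊢
    rw [valid_cons (by simp) c α] at h ⊢
    exact ⟨h.1, ih h.2⟩

lemma valid_cons_zero {a : List ℕ} {n c : ℕ} {r : List ℕ} {α : Ordinal}
    (h : Valid (a ++ n :: c :: r) α) : Valid (a ++ [n, 0]) α := by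
  induction a generalizing α with
  | nil =>
    obtain ⟨h1, -⟩ := h
    exact ⟨h1, valid_single 0 _⟩
  | cons e a ih =>
    rw [List.cons_append] at h ⊢
    rw [valid_cons (by simp) e α] at h ⊢
    exact ⟨h.1, ih h.2⟩

/-! ### The trees -/

noncomputable def Tr (α : Ordinal) : RTree where
  V := {l : List ℕ // Valid l α}
  le x y := lle x.1 y.1
  le_refl x := lle_refl (valid_ne_nil x.2)
  le_antisymm x y h h' := Subtype.ext (lle_antisymm h h')
  le_trans x y z h h' := lle_trans h h'
  root := ⟨[0], valid_single 0 _⟩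
  root_le v := lle_zero (valid_ne_nil v.2)
  pred_fin v := by
    have h : {w : {l : List ℕ // Valid l α} | lle w.1 v.1}
        = Subtype.val ⁻¹' {l : List ℕ | lle l v.1} := rfl
    rw [h]
    exact Set.Finite.preimage (Subtype.val_injective.injOn) (preds_finite v.1)
  pred_chain v a b ha hb := lle_chain ha hb

lemma Tr_le {α : Ordinal} (x y : (Tr α).V) : (Tr α).le x y ↔ lle x.1 y.1 := Iff.rfl

/-! ### Embedding lemmas -/

lemma embeds_refl (T : RTree) : T.Embeds T :=
  ⟨id, fun _ _ h => h, fun _ _ => Iff.rfl⟩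

lemma embeds_trans {T U W : RTree} (h1 : T.Embeds U) (h2 : U.Embeds W) : T.Embeds W := by
  obtain ⟨f, hf1, hf2⟩ := h1
  obtain ⟨g, hg1, hg2⟩ := h2
  exact ⟨g ∘ f, hg1.comp hf1, fun a b => (hf2 a b).trans (hg2 (f a) (f b))⟩

lemma embeds_cons {α γ : Ordinal} {n : ℕ} (h : dfun α n = γ) (hlt : dfun α n < α) :
    (Tr γ).Embeds (Tr α) := by
  refine ⟨fun x => ⟨n :: x.1, ?_⟩, ?_, ?_⟩
  · exact (valid_cons (valid_ne_nil x.2) n α).2 ⟨hlt, h ▸ x.2⟩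
  · intro x y hxy
    have h2 := congrArg Subtype.val hxy
    exact Subtype.ext (by simpa using h2)
  · intro a b
    show lle a.1 b.1 ↔ lle (n :: a.1) (n :: b.1)
    rw [lle_cons_cons _ _ _ _ (valid_ne_nil a.2)]
    simp

lemma embeds_mono : ∀ α : Ordinal, α < (Cardinal.aleph 1).ord →
    ∀ γ ≤ α, (Tr γ).Embeds (Tr α) := by
  intro α
  induction α using Ordinal.induction with
  | h α IH =>
    intro hα γ hγ
    rcases eq_or_lt_of_le hγ with rfl | hlt
    · exact embeds_refl _
    rcases Ordinal.zero_or_succ_or_isSuccLimit α with rfl | ⟨δ, hδ⟩ | hlim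
    · exact absurd hlt (not_lt.mpr (zero_le (a := γ)))
    · replace hδ : α = Order.succ δ := hδ.symm
      have hδα : δ < α := by rw [hδ]; exact Order.lt_succ δ
      have h1 : (Tr γ).Embeds (Tr δ) :=
        IH δ hδα (lt_trans hδα hα) γ (by
          rw [hδ, Order.lt_succ_iff] at hlt; exact hlt)
      have h2 : (Tr δ).Embeds (Tr α) := by
        have e : α = δ + 1 := by rw [hδ, Ordinal.add_one_eq_succ]
        rw [e]
        exact embeds_cons (dfun_succ δ 0)
          (by rw [dfun_succ, Ordinal.add_one_eq_succ]; exact Order.lt_succ δ)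
      exact embeds_trans h1 h2
    · have hns : ¬ ∃ δ, α = δ + 1 := by
        rintro ⟨δ, rfl⟩
        rw [Ordinal.add_one_eq_succ] at hlim
        exact Order.not_isSuccLimit_succ δ hlim
      obtain ⟨n, hn⟩ := dfun_surj hlt hα hns
      exact embeds_cons hn (hn ▸ hlt)

/-! ### Local finiteness -/

lemma locfin (α : Ordinal) : (Tr α).LocFin := by
  intro v
  obtain ⟨p, k, hv⟩ : ∃ p k, v.1 = p ++ [k] := by
    rcases List.eq_nil_or_concat v.1 with h | ⟨p, k, h⟩
    · exact absurd h (valid_ne_nil v.2)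
    · exact ⟨p, k, by rw [h, List.concat_eq_append]⟩
  have hfin : ({w : (Tr α).V | w.1 = p ++ [k+1] ∨ w.1 = v.1 ++ [0]}).Finite := by
    have h : {w : (Tr α).V | w.1 = p ++ [k+1] ∨ w.1 = v.1 ++ [0]}
        = Subtype.val ⁻¹' {p ++ [k+1], v.1 ++ [0]} := by
      ext w; exact Iff.rfl
    rw [h]
    exact Set.Finite.preimage (Subtype.val_injective.injOn)
      ((Set.finite_singleton _).insert _)
  apply hfin.subset
  rintro w ⟨hle, hne, hmin⟩
  obtain ⟨a, m, n, r, hvam, hwan, hmn⟩ := lle_dest hle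
  have hpa : a = p ∧ m = k := by
    have h1 := hvam.symm.trans hv
    have h2 := List.append_inj' h1 (by simp)
    exact ⟨h2.1, by simpa using h2.2⟩
  obtain ⟨rfl, rfl⟩ := hpa
  cases r with
  | nil =>
    rcases Nat.lt_or_ge m n with hkn | hkn
    · have hu : Valid (a ++ [m+1]) α := valid_snoc (hv ▸ v.2) (m+1)
      have h1 : (Tr α).le v ⟨_, hu⟩ := by
        show lle v.1 (a ++ (m+1) :: [])
        rw [hv]; exact lle_intro a [] (by omega)
      have h2 : (Tr α).le ⟨_, hu⟩ w := by
        show lle (a ++ (m+1) :: []) w.1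
        rw [hwan]
        exact lle_intro a [] (by omega)
      rcases hmin _ h1 h2 with h | h
      · have h3 := congrArg Subtype.val h
        rw [hv] at h3
        simp at h3
      · left
        rw [← congrArg Subtype.val h]
    · have hnm : n = m := le_antisymm hkn hmn
      subst hnm
      exact absurd (Subtype.ext (hv.trans hwan.symm)) hne
  | cons s r' =>
    rcases Nat.lt_or_ge m n with hkn | hkn
    · have hu : Valid (a ++ [n]) α := valid_concat_of_cons (hwan ▸ w.2)
      have h1 : (Tr α).le v ⟨_, hu⟩ := by
        show lle v.1 (a ++ n :: [])
        rw [hv]; exact lle_intro a [] hmn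
      have h2 : (Tr α).le ⟨_, hu⟩ w := by
        show lle (a ++ n :: []) w.1
        rw [hwan]; exact lle_intro a (s :: r') le_rfl
      rcases hmin _ h1 h2 with h | h
      · have h3 := congrArg Subtype.val h
        rw [hv] at h3
        simp at h3
        omega
      · have h3 := congrArg Subtype.val h
        rw [hwan] at h3
        have h4 := congrArg List.length h3
        simp at h4
    · have hnm : n = m := le_antisymm hkn hmn
      subst hnm
      have hu : Valid (a ++ [n, 0]) α := valid_cons_zero (hwan ▸ w.2)
      have h1 : (Tr α).le v ⟨_, hu⟩ := by
        show lle v.1 (a ++ n :: [0])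
        rw [hv]; exact lle_intro a [0] le_rfl
      have h2 : (Tr α).le ⟨_, hu⟩ w := by
        show lle (a ++ [n, 0]) w.1
        rw [hwan]
        have e1 : a ++ [n, 0] = (a ++ [n]) ++ [0] := by simp
        have e2 : a ++ n :: s :: r' = (a ++ [n]) ++ (s :: r') := by simp
        rw [e1, e2, lle_append_left _ (by simp)]
        exact lle_zero (by simp)
      rcases hmin _ h1 h2 with h | h
      · have h3 := congrArg Subtype.val h
        rw [hv] at h3
        have h4 := congrArg List.length h3
        simp at h4
      · right
        have h3 := congrArg Subtype.val h
        rw [← h3, hv]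
        simp

/-! ### The key non-embedding lemma -/

lemma step {α : Ordinal} (hα : α < (Cardinal.aleph 1).ord)
    (f : (Tr (α + 1)).V → (Tr α).V) (finj : Function.Injective f)
    (hf : ∀ a b, (Tr (α + 1)).le a b ↔ (Tr α).le (f a) (f b))
    (N : ℕ) (hvN : Valid [N, 0] (α + 1)) (hN : 2 ≤ (f ⟨[N, 0], hvN⟩).1.length) :
    ∃ δ, δ < α ∧ (Tr α).Embeds (Tr δ) := by
  obtain ⟨q₀, t, hq1, ht⟩ : ∃ q₀ t, (f ⟨[N, 0], hvN⟩).1 = q₀ :: t ∧ t ≠ [] := by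
    rcases hl : (f ⟨[N, 0], hvN⟩).1 with _ | ⟨q₀, t⟩
    · rw [hl] at hN; simp at hN
    · rcases t with _ | ⟨t0, t'⟩
      · rw [hl] at hN; simp at hN
      · exact ⟨q₀, t0 :: t', rfl, by simp⟩
  have hδ : dfun α q₀ < α ∧ Valid t (dfun α q₀) := by
    have h2 := (f ⟨[N, 0], hvN⟩).2
    rw [hq1, valid_cons ht] at h2
    exact h2
  refine ⟨dfun α q₀, hδ.1, ?_⟩
  have hXv : ∀ x : (Tr α).V, Valid (N :: x.1) (α + 1) := fun x =>
    (valid_cons (valid_ne_nil x.2) N (α + 1)).2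
      ⟨by rw [dfun_succ, Ordinal.add_one_eq_succ]; exact Order.lt_succ α,
       by rw [dfun_succ]; exact x.2⟩
  have hroot : ∀ x : (Tr α).V,
      (Tr (α + 1)).le ⟨[N, 0], hvN⟩ ⟨N :: x.1, hXv x⟩ := by
    intro x
    show lle (N :: [0]) (N :: x.1)
    rw [lle_cons_cons _ _ _ _ (by simp)]
    exact ⟨rfl, lle_zero (valid_ne_nil x.2)⟩
  have himg : ∀ x : (Tr α).V, ∃ z, (f ⟨N :: x.1, hXv x⟩).1 = q₀ :: z ∧ z ≠ [] := by
    intro x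
    have h1 : lle (f ⟨[N, 0], hvN⟩).1 (f ⟨N :: x.1, hXv x⟩).1 := (hf _ _).1 (hroot x)
    rw [hq1] at h1
    rcases hY : (f ⟨N :: x.1, hXv x⟩).1 with _ | ⟨c, s⟩
    · rw [hY] at h1; exact absurd h1 (lle_nil_right _)
    · rw [hY, lle_cons_cons _ _ _ _ ht] at h1
      exact ⟨s, by rw [h1.1], lle_ne_nil_right h1.2⟩
  choose z hz hznil using himg
  refine ⟨fun x => ⟨z x, ?_⟩, ?_, ?_⟩
  · have h2 := (f ⟨N :: x.1, hXv x⟩).2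
    rw [hz x, valid_cons (hznil x)] at h2
    exact h2.2
  · intro x y hxy
    have h1 : (f ⟨N :: x.1, hXv x⟩).1 = (f ⟨N :: y.1, hXv y⟩).1 := by
      rw [hz x, hz y]
      exact congrArg (q₀ :: ·) (congrArg Subtype.val hxy)
    have h2 := finj (Subtype.ext h1)
    have h3 := congrArg Subtype.val h2
    exact Subtype.ext (by simpa using h3)
  · intro a b
    show lle a.1 b.1 ↔ lle (z a) (z b)
    have h1 : lle a.1 b.1 ↔ lle (N :: a.1) (N :: b.1) := by
      rw [lle_cons_cons _ _ _ _ (valid_ne_nil a.2)]; simp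
    have h2 := hf ⟨N :: a.1, hXv a⟩ ⟨N :: b.1, hXv b⟩
    change lle (N :: a.1) (N :: b.1) ↔ _ at h2
    have h3 : lle (f ⟨N :: a.1, hXv a⟩).1 (f ⟨N :: b.1, hXv b⟩).1 ↔ lle (z a) (z b) := by
      rw [hz a, hz b, lle_cons_cons _ _ _ _ (hznil a)]; simp
    exact h1.trans (h2.trans h3)

lemma key : ∀ α : Ordinal, α < (Cardinal.aleph 1).ord → ¬ (Tr (α + 1)).Embeds (Tr α) := by
  intro α
  induction α using Ordinal.induction with
  | h α IH =>
    intro hα hemb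
    obtain ⟨f, finj, hf⟩ := hemb
    have hv : ∀ N : ℕ, Valid [N, 0] (α + 1) := fun N =>
      (valid_cons (by simp) N (α + 1)).2
        ⟨by rw [dfun_succ, Ordinal.add_one_eq_succ]; exact Order.lt_succ α,
         valid_single 0 _⟩
    by_cases hlen : ∃ N : ℕ, 2 ≤ (f ⟨[N, 0], hv N⟩).1.length
    · obtain ⟨N, hN⟩ := hlen
      obtain ⟨δ, hδα, hembed⟩ := step hα f finj hf N (hv N) hN
      have hδ1 : δ + 1 ≤ α := by
        rw [Ordinal.add_one_eq_succ, Order.succ_le_iff]; exact hδα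
      have h2 : (Tr (δ + 1)).Embeds (Tr α) := embeds_mono α hα (δ + 1) hδ1
      exact IH δ hδα (lt_trans hδα hα) (embeds_trans h2 hembed)
    · push_neg at hlen
      have hsing : ∀ N : ℕ, ∃ c, (f ⟨[N, 0], hv N⟩).1 = [c] := by
        intro N
        have h1 := hlen N
        have h2 : (f ⟨[N, 0], hv N⟩).1 ≠ [] := valid_ne_nil (f ⟨[N, 0], hv N⟩).2
        have h3 : (f ⟨[N, 0], hv N⟩).1.length = 1 := by
          have h4 := List.length_pos_iff.mpr h2
          omega
        exact List.length_eq_one_iff.mp h3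
      obtain ⟨c, hc⟩ := hsing 0
      obtain ⟨c', hc'⟩ := hsing 1
      have hv1 : Valid [1] (α + 1) := valid_single 1 _
      have h10 : (Tr (α + 1)).le ⟨[1], hv1⟩ ⟨[1, 0], hv 1⟩ := by
        show lle [1] (1 :: [0]); exact le_refl 1
      have h2 := (hf _ _).1 h10
      rw [Tr_le, hc'] at h2
      obtain ⟨b, hb⟩ : ∃ b, (f ⟨[1], hv1⟩).1 = [b] := by
        rcases lle_cons_inv h2 with ⟨m, hm, -⟩ | ⟨l, hl, hlne, hll⟩
        · exact ⟨m, hm⟩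
        · exact absurd hll (lle_nil_right _)
      rcases le_total b c with h | h
      · have h3 : (Tr α).le (f ⟨[1], hv1⟩) (f ⟨[0, 0], hv 0⟩) := by
          rw [Tr_le, hb, hc]; exact h
        have h4 := (hf _ _).2 h3
        change lle [1] [0, 0] at h4
        simp [lle] at h4
      · have h3 : (Tr α).le (f ⟨[0, 0], hv 0⟩) (f ⟨[1], hv1⟩) := by
          rw [Tr_le, hb, hc]; exact h
        have h4 := (hf _ _).2 h3
        change lle [0, 0] [1] at h4
        simp [lle] at h4

/-! ### Main theorem -/

/-- There is a family of ω₁ many countable rooted locally finite trees that is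
strictly increasing under the topological minor relation; in particular there
are at least ℵ₁ pairwise non-equivalent such trees. -/
theorem exists_omega1_chain_of_topological_types :
    ∃ T : Ordinal → RTree,
      (∀ α : Ordinal, α < (Cardinal.aleph 1).ord →
        (T α).LocFin ∧ Countable (T α).V) ∧
      ∀ α β : Ordinal, α < β → β < (Cardinal.aleph 1).ord →
        (T α).Embeds (T β) ∧ ¬ (T β).Embeds (T α) := by
  refine ⟨Tr, fun α _ => ⟨locfin α, ?_⟩, fun α β hab hβ => ⟨?_, ?_⟩⟩
  · exact inferInstanceAs (Countable {l : List ℕ // Valid l α})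
  · exact embeds_mono β hβ α hab.le
  · intro h
    have hα : α < (Cardinal.aleph 1).ord := lt_trans hab hβ
    have h1 : α + 1 ≤ β := by
      rw [Ordinal.add_one_eq_succ, Order.succ_le_iff]; exact hab
    have h2 : (Tr (α + 1)).Embeds (Tr β) := embeds_mono β hβ (α + 1) h1
    exact key α hα (embeds_trans h2 h)
end
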